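/- For every integer n ≥ 3 and every integer k with 2n - 3 ≤ k ≤ n(n-1)/2, there exist real numbers a_1 < a_2 < ... < a_n such that the set of pairwise sums {a_i + a_j : i < j} has exactly k elements. -/

import Mathlib

open Finset

-- sum of range = choose
lemma sum_range_id_choose (n : ℕ) : ∑ i ∈ Finset.range n, i = n.choose 2 := by
  induction n with
  | zero => simp
  | succ n ih => rw [Finset.sum_range_succ, ih, Nat.choose_succ_succ n 1]; simp [Nat.choose_one_right]; omega

-- arithmetic existence
lemma exists_mt : ∀ n, 3 ≤ n → ∀ k, 2*n - 3 ≤ k → k ≤ n.choose 2 →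
    ∃ m t, 3 ≤ m ∧ m ≤ n ∧ m ≤ t ∧ t + 3 ≤ 2*m ∧ k + m.choose 2 + 3 = t + m + n.choose 2 := by
  intro n
  induction n with
  | zero => omega
  | succ n ih =>
    intro hn k hk1 hk2
    rcases Nat.lt_or_ge n 3 with h3 | h3
    · -- n+1 = 3
      interval_cases n
      · omega
      · omega
      · -- n = 2, so n+1 = 3, k = 3
        have : k = 3 := by
          have : (2+1).choose 2 = 3 := by decide
          omega
        subst this
        exact ⟨3, 3, by norm_num [Nat.choose]⟩
    · have hc : (n+1).choose 2 = n.choose 2 + n := by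
        rw [Nat.choose_succ_succ n 1]; simp [Nat.choose_one_right]; omega
      rcases Nat.lt_or_ge k (3*n - 2) with hks | hks
      · -- k ≤ 3n-3 : take m = n+1, t = k+2-n
        refine ⟨n+1, k + 2 - n, by omega, le_refl _, by omega, by omega, by omega⟩
      · -- k ≥ 3n-2 : recurse with k - n
        obtain ⟨m, t, h1, h2, h3', h4, h5⟩ := ih h3 (k - n) (by omega) (by omega)
        exact ⟨m, t, h1, by omega, h3', h4, by omega⟩

def ff (n m t i : ℕ) : ℕ := if i + 1 < m then i + 1 else if i + 1 = m then t else 4*n*5^i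

section
variable {n m t : ℕ} (hm3 : 3 ≤ m) (hmn : m ≤ n) (hmt : m ≤ t) (ht : t + 3 ≤ 2*m)

lemma ff_small {i : ℕ} (h : i + 1 < m) : ff n m t i = i + 1 := if_pos h
lemma ff_slot {i : ℕ} (h : i + 1 = m) : ff n m t i = t := by simp [ff, h]
lemma ff_big {i : ℕ} (h : m ≤ i) : ff n m t i = 4*n*5^i := by
  simp only [ff, if_neg (by omega : ¬ i+1 < m), if_neg (by omega : ¬ i+1 = m)]

include hmt in
lemma ff_le {i : ℕ} (h : i < m) : ff n m t i ≤ t := by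
  rcases Nat.lt_or_ge (i+1) m with h'|h'
  · rw [ff_small h']; omega
  · rw [ff_slot (by omega)]

include hmt in
lemma ff_ge {i : ℕ} (h : i < m) : i + 1 ≤ ff n m t i := by
  rcases Nat.lt_or_ge (i+1) m with h'|h'
  · rw [ff_small h']
  · rw [ff_slot (by omega)]; omega

include hm3 hmn hmt ht in
lemma ff_mono : StrictMono (ff n m t) := by
  apply strictMono_nat_of_lt_succ
  intro i
  rcases Nat.lt_or_ge (i+2) m with h|h
  · rw [ff_small (by omega), ff_small (by omega)]; omega
  rcases Nat.eq_or_lt_of_le h with h|h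
  · rw [ff_small (by omega), ff_slot (by omega)]; omega
  rcases (by omega : i + 1 = m ∨ m ≤ i) with h'|h'
  · rw [ff_slot h', ff_big (by omega)]
    have : 4*n*1 ≤ 4*n*5^(i+1) := Nat.mul_le_mul_left _ (Nat.one_le_pow _ _ (by norm_num))
    omega
  · rw [ff_big h', ff_big (by omega)]
    have : 0 < 4*n := by omega
    exact (Nat.mul_lt_mul_left this).2 (Nat.pow_lt_pow_right (by norm_num) (by omega))

include hmt in
lemma ff_pos (hn : 0 < n) (i : ℕ) : 0 < ff n m t i := by
  rcases Nat.lt_or_ge i m with h|h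
  · have := ff_ge (n := n) hmt h; omega
  · rw [ff_big h]
    exact Nat.mul_pos (by omega) (Nat.pow_pos (by norm_num))

end

lemma sum_if_ge_choose (m n : ℕ) (h : m ≤ n) :
    (∑ j ∈ Finset.range n, if m ≤ j then j else 0) + m.choose 2 = n.choose 2 := by
  induction n, h using Nat.le_induction with
  | base =>
    have : ∀ j ∈ Finset.range m, (if m ≤ j then j else 0) = 0 := by
      intro j hj; rw [Finset.mem_range] at hj; simp [Nat.not_le.mpr hj]
    rw [Finset.sum_congr rfl this]; simp
  | succ n hmn ih =>
    rw [Finset.sum_range_succ, if_pos hmn]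
    have h2 : (n+1).choose 2 = n.choose 1 + n.choose 2 := Nat.choose_succ_succ n 1
    rw [Nat.choose_one_right] at h2
    omega

lemma card_P2 (n m : ℕ) (h : m ≤ n) :
    (((Finset.univ : Finset (Fin n × Fin n))).filter
      (fun p => p.1 < p.2 ∧ m ≤ (p.2 : ℕ))).card + m.choose 2 = n.choose 2 := by
  rw [Finset.card_filter]
  rw [← Finset.univ_product_univ, Finset.sum_product]
  rw [Finset.sum_comm]
  have inner : ∀ j : Fin n, (∑ i : Fin n, if i < j ∧ m ≤ (j:ℕ) then 1 else 0)
      = if m ≤ (j:ℕ) then (j:ℕ) else 0 := by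
    intro j
    by_cases hj : m ≤ (j:ℕ)
    · simp only [hj, and_true, if_true]
      rw [← Finset.card_filter]
      have : Finset.univ.filter (fun i : Fin n => i < j) = Finset.Iio j := by
        ext i; simp
      rw [this, Fin.card_Iio]
    · simp [hj]
  rw [Finset.sum_congr rfl (fun j _ => inner j), Fin.sum_univ_eq_sum_range (fun j => if m ≤ j then j else 0)]
  exact sum_if_ge_choose m n h

section
variable {n m t : ℕ} (hm3 : 3 ≤ m) (hmn : m ≤ n) (hmt : m ≤ t) (ht : t + 3 ≤ 2*m)

include hm3 hmn hmt ht in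
lemma ff_le_pow (i : ℕ) : ff n m t i ≤ 4*n*5^i := by
  rcases Nat.lt_or_ge i m with h|h
  · have h1 := ff_le (n := n) hmt h
    have h2 : 4*n*1 ≤ 4*n*5^i := Nat.mul_le_mul_left _ (Nat.one_le_pow _ _ (by norm_num))
    omega
  · rw [ff_big h]

include hm3 hmn hmt ht in
lemma image1_eq :
    (((Finset.univ : Finset (Fin n × Fin n))).filter
      (fun p => p.1 < p.2 ∧ (p.2 : ℕ) < m)).image (fun p => ff n m t p.1 + ff n m t p.2)
    = Finset.Icc 3 (t + m - 1) := by
  ext s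
  simp only [Finset.mem_image, Finset.mem_filter, Finset.mem_univ, true_and, Finset.mem_Icc]
  constructor
  · rintro ⟨⟨p1, p2⟩, ⟨hlt, hp2⟩, rfl⟩
    have hp1 : (p1:ℕ) < (p2:ℕ) := hlt
    have hp2' : (p2:ℕ) < m := hp2
    show 3 ≤ ff n m t p1 + ff n m t p2 ∧ ff n m t p1 + ff n m t p2 ≤ t+m-1
    rcases Nat.lt_or_ge ((p2:ℕ)+1) m with h2|h2
    · rw [ff_small (by omega), ff_small h2]; omega
    · have h2' : (p2:ℕ)+1 = m := by omega
      rw [ff_small (by omega), ff_slot h2']; omega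
  · rintro ⟨h3, hub⟩
    rcases Nat.lt_or_ge s (m+1) with h|h
    · -- s ≤ m : pair (0, s-2)
      refine ⟨(⟨0, by omega⟩, ⟨s-2, by omega⟩), ⟨?_, ?_⟩, ?_⟩
      · simp [Fin.lt_def]; omega
      · simp; omega
      · show ff n m t 0 + ff n m t (s-2) = s
        rw [ff_small (by omega), ff_small (by omega)]; omega
    rcases Nat.lt_or_ge s (2*m-2) with h'|h'
    · -- m < s ≤ 2m-3 : pair (s-m, m-2)
      refine ⟨(⟨s-m, by omega⟩, ⟨m-2, by omega⟩), ⟨?_, ?_⟩, ?_⟩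
      · simp [Fin.lt_def]; omega
      · simp; omega
      · show ff n m t (s-m) + ff n m t (m-2) = s
        rw [ff_small (by omega), ff_small (by omega)]; omega
    · -- pair (s-t-1, m-1)
      refine ⟨(⟨s-t-1, by omega⟩, ⟨m-1, by omega⟩), ⟨?_, ?_⟩, ?_⟩
      · simp [Fin.lt_def]; omega
      · simp; omega
      · show ff n m t (s-t-1) + ff n m t (m-1) = s
        rw [ff_small (by omega), ff_slot (by omega)]; omega

end

section
variable {n m t : ℕ} (hm3 : 3 ≤ m) (hmn : m ≤ n) (hmt : m ≤ t) (ht : t + 3 ≤ 2*m)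

include hm3 hmn hmt ht in
lemma cross_lt {i j i' j' : ℕ} (hij : i < j) (hj : m ≤ j) (hjj : j < j') :
    ff n m t i + ff n m t j < ff n m t i' + ff n m t j' := by
  have h1 : ff n m t i ≤ 4*n*5^i := ff_le_pow hm3 hmn hmt ht i
  have h2 : (5:ℕ)^i ≤ 5^j := Nat.pow_le_pow_right (by norm_num) (le_of_lt hij)
  have h3 : (5:ℕ)^(j+1) ≤ 5^j' := Nat.pow_le_pow_right (by norm_num) hjj
  have h4 : (5:ℕ)^(j+1) = 5*5^j := by ring
  have h5 : ff n m t j = 4*n*5^j := ff_big hj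
  have h6 : ff n m t j' = 4*n*5^(j') := ff_big (by omega)
  have h7 : 0 < ff n m t i' := ff_pos hmt (by omega) i'
  have hn : 0 < n := by omega
  have : 4*n*5^i + 4*n*5^j < 4*n*5^(j') := by
    calc 4*n*5^i + 4*n*5^j ≤ 4*n*5^j + 4*n*5^j := by
          exact Nat.add_le_add_right (Nat.mul_le_mul_left _ h2) _
    _ < 4*n*(5*5^j) := by
          have h8 : 0 < (5:ℕ)^j := Nat.pow_pos (by norm_num)
          nlinarith
    _ = 4*n*5^(j+1) := by rw [h4]
    _ ≤ 4*n*5^(j') := Nat.mul_le_mul_left _ h3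
  omega

include hm3 hmn hmt ht in
lemma inj2 : Set.InjOn (fun p : Fin n × Fin n => ff n m t p.1 + ff n m t p.2)
    ↑(((Finset.univ : Finset (Fin n × Fin n))).filter
      (fun p => p.1 < p.2 ∧ m ≤ (p.2 : ℕ))) := by
  rintro ⟨p1, p2⟩ hp ⟨q1, q2⟩ hq heq
  simp only [Finset.coe_filter, Set.mem_setOf_eq, Finset.mem_univ, true_and] at hp hq
  obtain ⟨hp12, hpm⟩ := hp
  obtain ⟨hq12, hqm⟩ := hq
  have heq' : ff n m t p1 + ff n m t p2 = ff n m t q1 + ff n m t q2 := heq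
  have e2 : (p2:ℕ) = (q2:ℕ) := by
    rcases lt_trichotomy (p2:ℕ) (q2:ℕ) with h|h|h
    · exact absurd heq' (Nat.ne_of_lt (cross_lt hm3 hmn hmt ht hp12 hpm h))
    · exact h
    · exact absurd heq'.symm (Nat.ne_of_lt (cross_lt hm3 hmn hmt ht hq12 hqm h))
  have e2' : p2 = q2 := Fin.ext e2
  have e1 : ff n m t p1 = ff n m t q1 := by
    rw [ff_big (n := n) (t := t) (e2 ▸ hpm : m ≤ (p2:ℕ))] at heq'
    rw [ff_big (n := n) (t := t) hqm, ← e2] at heq'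
    omega
  have : (p1:ℕ) = (q1:ℕ) := (ff_mono hm3 hmn hmt ht).injective e1
  exact Prod.ext (Fin.ext this) e2'

include hm3 hmn hmt ht in
lemma key_card :
    ((((Finset.univ : Finset (Fin n × Fin n))).filter (fun p => p.1 < p.2)).image
      (fun p => ff n m t p.1 + ff n m t p.2)).card + 3 + m.choose 2
    = t + m + n.choose 2 := by
  classical
  set g := fun p : Fin n × Fin n => ff n m t p.1 + ff n m t p.2 with hg
  have hsplit : ((Finset.univ : Finset (Fin n × Fin n))).filter (fun p => p.1 < p.2)
      = (Finset.univ.filter (fun p : Fin n × Fin n => p.1 < p.2 ∧ ((p.2 : ℕ) < m)))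
        ∪ (Finset.univ.filter (fun p : Fin n × Fin n => p.1 < p.2 ∧ m ≤ (p.2 : ℕ))) := by
    ext p
    simp only [Finset.mem_filter, Finset.mem_union, Finset.mem_univ, true_and]
    omega
  rw [hsplit, Finset.image_union]
  have hdisj : Disjoint
      ((Finset.univ.filter (fun p : Fin n × Fin n => p.1 < p.2 ∧ ((p.2 : ℕ) < m))).image g)
      ((Finset.univ.filter (fun p : Fin n × Fin n => p.1 < p.2 ∧ m ≤ (p.2 : ℕ))).image g) := by
    rw [Finset.disjoint_left]
    rintro s hs1 hs2
    rw [image1_eq hm3 hmn hmt ht] at hs1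
    rw [Finset.mem_Icc] at hs1
    rw [Finset.mem_image] at hs2
    obtain ⟨⟨q1, q2⟩, hq, rfl⟩ := hs2
    simp only [Finset.mem_filter, Finset.mem_univ, true_and] at hq
    have h5 : (4*n*1 : ℕ) ≤ 4*n*5^(q2:ℕ) :=
      Nat.mul_le_mul_left _ (Nat.one_le_pow _ _ (by norm_num))
    have hb : ff n m t q2 = 4*n*5^(q2:ℕ) := ff_big hq.2
    have : g (q1, q2) = ff n m t q1 + ff n m t q2 := rfl
    omega
  rw [Finset.card_union_of_disjoint hdisj]
  rw [image1_eq hm3 hmn hmt ht]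
  rw [Finset.card_image_of_injOn (inj2 hm3 hmn hmt ht)]
  rw [Nat.card_Icc]
  have := card_P2 n m hmn
  omega

end

theorem stmt_5 (n k : ℕ) (hn : 3 ≤ n) (hk1 : 2 * n - 3 ≤ k) (hk2 : k ≤ n * (n - 1) / 2) :
    ∃ a : Fin n → ℝ, StrictMono a ∧
      (((Finset.univ : Finset (Fin n × Fin n)).filter (fun p => p.1 < p.2)).image
        (fun p => a p.1 + a p.2)).card = k := by
  have hk2' : k ≤ n.choose 2 := by rwa [Nat.choose_two_right]
  obtain ⟨m, t, hm3, hmn, hmt, ht, heq⟩ := exists_mt n hn k hk1 hk2'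
  refine ⟨fun i => ((ff n m t i : ℕ) : ℝ), ?_, ?_⟩
  · intro i j hij
    exact_mod_cast Nat.cast_lt.mpr (ff_mono hm3 hmn hmt ht (show (i:ℕ) < (j:ℕ) from hij))
  · have hfun : (fun p : Fin n × Fin n => ((ff n m t p.1 : ℕ):ℝ) + ((ff n m t p.2 : ℕ):ℝ))
        = (fun p : Fin n × Fin n => (((ff n m t p.1 + ff n m t p.2 : ℕ)) : ℝ)) := by
      funext p; push_cast; ring
    rw [hfun]
    rw [show (fun p : Fin n × Fin n => (((ff n m t p.1 + ff n m t p.2 : ℕ)) : ℝ))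
        = (fun x : ℕ => (x : ℝ)) ∘ (fun p : Fin n × Fin n => ff n m t p.1 + ff n m t p.2) from rfl]
    rw [← Finset.image_image, Finset.card_image_of_injective _ Nat.cast_injective]
    have := key_card hm3 hmn hmt ht
    omega
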